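/- Let Θ, Θ̃, Λ, Λ̃ be measurable functions with Θ(u) = Λ(u/2)Θ(u/2) and Θ̃(u) = Λ̃(u/2)Θ̃(u/2) a.e., Λ, Λ̃ being 2π-periodic, and suppose ∑_{k∈ℤ} Θ(u+2πk) conj(Θ̃(u+2πk)) = 1 a.e. Then Λ(v) conj(Λ̃(v)) + Λ(v+π) conj(Λ̃(v+π)) = 1 for a.e. v. -/
import Mathlib


open MeasureTheory ComplexConjugate

private lemma ae_comp_affine {P : ℝ → Prop} (a b : ℝ) (ha : a ≠ 0)
    (h : ∀ᵐ u ∂(volume : Measure ℝ), P u) :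
    ∀ᵐ v ∂(volume : Measure ℝ), P (a * v + b) := by
  have q1 : Measure.QuasiMeasurePreserving (fun v : ℝ => a * v) volume volume :=
    ⟨measurable_const_mul a, by
      rw [Real.map_volume_mul_left ha]
      exact Measure.AbsolutelyContinuous.mk fun s _ h0 => by simp [h0]⟩
  have q2 : Measure.QuasiMeasurePreserving (fun v : ℝ => v + b) volume volume :=
    (measurePreserving_add_right volume b).quasiMeasurePreserving
  exact (q2.comp q1).ae h

private def evenEquiv : ℤ ≃ ↥{k : ℤ | 2 ∣ k} where
  toFun m := ⟨2 * m, ⟨m, rfl⟩⟩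
  invFun k := k.1 / 2
  left_inv m := by show (2 * m) / 2 = m; omega
  right_inv := fun ⟨k, hk⟩ => by
    have hk' : 2 ∣ k := hk
    exact Subtype.ext (by simp only; omega)

private def oddEquiv : ℤ ≃ ↥({k : ℤ | 2 ∣ k}ᶜ) where
  toFun m := ⟨2 * m + 1, by simp only [Set.mem_compl_iff, Set.mem_setOf_eq]; omega⟩
  invFun k := k.1 / 2
  left_inv m := by show (2 * m + 1) / 2 = m; omega
  right_inv := fun ⟨k, hk⟩ => by
    have hk' : ¬ (2 ∣ k) := hk
    exact Subtype.ext (by simp only; omega)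

/-- the biorthogonality of the scaling brackets transfers to the
low-pass filters: Λ(v)conj(Λ̃(v)) + Λ(v+π)conj(Λ̃(v+π)) = 1 a.e. -/
theorem stmt_12 (Θ Θt Λ Λt : ℝ → ℂ)
    (hΘmeas : Measurable Θ) (hΘtmeas : Measurable Θt)
    (hΛmeas : Measurable Λ) (hΛtmeas : Measurable Λt)
    (hΛper : ∀ u : ℝ, Λ (u + 2 * Real.pi) = Λ u)
    (hΛtper : ∀ u : ℝ, Λt (u + 2 * Real.pi) = Λt u)
    (href : ∀ᵐ u ∂(volume : Measure ℝ), Θ u = Λ (u / 2) * Θ (u / 2))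
    (hreft : ∀ᵐ u ∂(volume : Measure ℝ), Θt u = Λt (u / 2) * Θt (u / 2))
    (hbracket : ∀ᵐ u ∂(volume : Measure ℝ),
      ∑' k : ℤ, Θ (u + 2 * Real.pi * (k : ℝ)) * conj (Θt (u + 2 * Real.pi * (k : ℝ))) = 1) :
    ∀ᵐ v ∂(volume : Measure ℝ),
      Λ v * conj (Λt v) + Λ (v + Real.pi) * conj (Λt (v + Real.pi)) = 1 := by
  set π := Real.pi with hπ
  -- periodicity with integer multiples
  have hΛp : Function.Periodic Λ (2 * π) := hΛper
  have hΛtp : Function.Periodic Λt (2 * π) := hΛtper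
  have hΛZ : ∀ (x : ℝ) (m : ℤ), Λ (x + 2 * π * m) = Λ x := by
    intro x m
    have := (hΛp.int_mul m) x
    rwa [show (m : ℝ) * (2 * π) = 2 * π * m by ring] at this
  have hΛtZ : ∀ (x : ℝ) (m : ℤ), Λt (x + 2 * π * m) = Λt x := by
    intro x m
    have := (hΛtp.int_mul m) x
    rwa [show (m : ℝ) * (2 * π) = 2 * π * m by ring] at this
  -- a.e. refinement at 2v + 2πk
  have H1 : ∀ᵐ v ∂(volume : Measure ℝ), ∀ k : ℤ,
      Θ (2 * v + 2 * π * k) = Λ (v + π * k) * Θ (v + π * k) := by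
    rw [ae_all_iff]
    intro k
    have h := ae_comp_affine 2 (2 * π * k) two_ne_zero href
    filter_upwards [h] with v hv
    have e : (2 * v + 2 * π * k) / 2 = v + π * k := by ring
    rwa [e] at hv
  have H2 : ∀ᵐ v ∂(volume : Measure ℝ), ∀ k : ℤ,
      Θt (2 * v + 2 * π * k) = Λt (v + π * k) * Θt (v + π * k) := by
    rw [ae_all_iff]
    intro k
    have h := ae_comp_affine 2 (2 * π * k) two_ne_zero hreft
    filter_upwards [h] with v hv
    have e : (2 * v + 2 * π * k) / 2 = v + π * k := by ring
    rwa [e] at hv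
  -- a.e. bracket at v + π and at 2v
  have H4 : ∀ᵐ v ∂(volume : Measure ℝ),
      ∑' k : ℤ, Θ (v + π + 2 * π * k) * conj (Θt (v + π + 2 * π * k)) = 1 := by
    have h := ae_comp_affine 1 π one_ne_zero hbracket
    filter_upwards [h] with v hv
    simpa using hv
  have H5 : ∀ᵐ v ∂(volume : Measure ℝ),
      ∑' k : ℤ, Θ (2 * v + 2 * π * k) * conj (Θt (2 * v + 2 * π * k)) = 1 := by
    have h := ae_comp_affine 2 0 two_ne_zero hbracket
    filter_upwards [h] with v hv
    simpa using hv
  filter_upwards [H1, H2, hbracket, H4, H5] with v h1 h2 h3 h4 h5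
  set A := Λ v * conj (Λt v) with hA
  set B := Λ (v + π) * conj (Λt (v + π)) with hB
  set F : ℤ → ℂ := fun k => Θ (2 * v + 2 * π * k) * conj (Θt (2 * v + 2 * π * k)) with hF
  set G : ℤ → ℂ := fun k => Θ (v + 2 * π * k) * conj (Θt (v + 2 * π * k)) with hG
  set G' : ℤ → ℂ := fun k => Θ (v + π + 2 * π * k) * conj (Θt (v + π + 2 * π * k)) with hG'
  -- summability of G and G'
  have hGsum : Summable G := by
    by_contra hs
    rw [tsum_eq_zero_of_not_summable hs] at h3
    exact one_ne_zero h3.symm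
  have hG'sum : Summable G' := by
    by_contra hs
    rw [tsum_eq_zero_of_not_summable hs] at h4
    exact one_ne_zero h4.symm
  have hGhas : HasSum G 1 := h3 ▸ hGsum.hasSum
  have hG'has : HasSum G' 1 := h4 ▸ hG'sum.hasSum
  -- even and odd parts of F
  have hFeven : ∀ m : ℤ, F (2 * m) = A * G m := by
    intro m
    have e1 : v + π * ((2 * m : ℤ) : ℝ) = v + 2 * π * m := by push_cast; ring
    rw [hF]
    simp only
    rw [h1 (2 * m), h2 (2 * m), e1, map_mul]
    rw [hΛZ v m, hΛtZ v m]
    ring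
  have hFodd : ∀ m : ℤ, F (2 * m + 1) = B * G' m := by
    intro m
    have e1 : v + π * ((2 * m + 1 : ℤ) : ℝ) = (v + π) + 2 * π * m := by push_cast; ring
    rw [hF]
    simp only
    rw [h1 (2 * m + 1), h2 (2 * m + 1), e1, map_mul]
    rw [hΛZ (v + π) m, hΛtZ (v + π) m]
    ring
  -- sum F over even and odd integers
  have hEven : HasSum (F ∘ (↑) : ↥{k : ℤ | 2 ∣ k} → ℂ) A := by
    rw [← evenEquiv.hasSum_iff]
    have : ((F ∘ (↑)) ∘ evenEquiv : ℤ → ℂ) = fun m => A * G m := by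
      funext m
      exact hFeven m
    rw [this]
    simpa using hGhas.mul_left A
  have hOdd : HasSum (F ∘ (↑) : ↥({k : ℤ | 2 ∣ k}ᶜ) → ℂ) B := by
    rw [← oddEquiv.hasSum_iff]
    have : ((F ∘ (↑)) ∘ oddEquiv : ℤ → ℂ) = fun m => B * G' m := by
      funext m
      exact hFodd m
    rw [this]
    simpa using hG'has.mul_left B
  have hFhas : HasSum F (A + B) := HasSum.add_isCompl isCompl_compl hEven hOdd
  calc A + B = ∑' k, F k := hFhas.tsum_eq.symm
    _ = 1 := h5
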